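/- Let ψ ∈ L¹(ℝ^d) be nonnegative with ∫_{|u|≥ρ} ψ(u) du ≤ c ρ^{−β} for all ρ ≥ 1, where 0 < β ≤ 1 and c > 0. Let W : ℝ^d → [0,∞) be measurable and bounded, and suppose W(h) ≤ c_Ω|h|^{β_Ω} for all |h| ≤ 2, where 0 < β_Ω ≤ 1 and c_Ω > 0. Then there exists a constant C such that for all λ ≥ 2: λ^{2d} ∫_{ℝ^d} ψ(2λx) W(2x) dx ≤ C · λ^{d−min(β,β_Ω)} if β ≠ β_Ω, and λ^{2d} ∫_{ℝ^d} ψ(2λx) W(2x) dx ≤ C · λ^{d−β} log λ if β = β_Ω. -/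

import Mathlib

open MeasureTheory
open scoped ENNReal

noncomputable section

/-- Euclidean space `ℝ^d`. -/
abbrev Ed (d : ℕ) := EuclideanSpace ℝ (Fin d)

lemma abel_pointwise {g : ℝ → ℝ} (hg : Monotone g) (ρ : ℕ → ℝ) (hρ : Monotone ρ)
    (N : ℕ) (hcap : ∀ r, g r ≤ g (ρ N)) (r : ℝ) :
    g r ≤ g (ρ 0) + ∑ k ∈ Finset.range N, (g (ρ (k+1)) - g (ρ k)) * (if ρ k ≤ r then 1 else 0) := by
  have hΔ : ∀ k, 0 ≤ g (ρ (k+1)) - g (ρ k) := fun k => sub_nonneg.2 (hg (hρ (Nat.le_succ k)))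
  by_cases hN : ρ N ≤ r
  · have : ∀ k ∈ Finset.range N, (g (ρ (k+1)) - g (ρ k)) * (if ρ k ≤ r then 1 else 0)
        = g (ρ (k+1)) - g (ρ k) := by
      intro k hk
      rw [if_pos (le_trans (hρ (Nat.le_of_lt_succ (Nat.lt_succ_of_lt (Finset.mem_range.1 hk)))) hN), mul_one]
    rw [Finset.sum_congr rfl this, Finset.sum_range_sub (fun k => g (ρ k))]
    linarith [hcap r]
  · have hex : ∃ k, ¬ ρ k ≤ r := ⟨N, hN⟩
    set m := Nat.find hex with hm
    have hmle : m ≤ N := Nat.find_le hN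
    have hmr : r ≤ ρ m := (not_le.1 (Nat.find_spec hex)).le
    have hbelow : ∀ k, k < m → ρ k ≤ r := fun k hk => not_not.1 (Nat.find_min hex hk)
    have key : g (ρ 0) + ∑ k ∈ Finset.range m, (g (ρ (k+1)) - g (ρ k)) * (if ρ k ≤ r then 1 else 0)
        = g (ρ m) := by
      have : ∀ k ∈ Finset.range m, (g (ρ (k+1)) - g (ρ k)) * (if ρ k ≤ r then 1 else 0)
          = g (ρ (k+1)) - g (ρ k) := by
        intro k hk; rw [if_pos (hbelow k (Finset.mem_range.1 hk)), mul_one]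
      rw [Finset.sum_congr rfl this, Finset.sum_range_sub (fun k => g (ρ k))]; ring
    have hsub : ∑ k ∈ Finset.range m, (g (ρ (k+1)) - g (ρ k)) * (if ρ k ≤ r then 1 else 0)
        ≤ ∑ k ∈ Finset.range N, (g (ρ (k+1)) - g (ρ k)) * (if ρ k ≤ r then 1 else 0) := by
      apply Finset.sum_le_sum_of_subset_of_nonneg (Finset.range_subset_range.2 hmle)
      intro k _ _
      exact mul_nonneg (hΔ k) (by positivity)
    calc g r ≤ g (ρ m) := hg hmr
    _ = _ := key.symm
    _ ≤ _ := by linarith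

set_option maxHeartbeats 2000000 in
theorem statement12 (d : ℕ) (hd : 0 < d)
    (ψ : Ed d → ℝ) (hψint : Integrable ψ) (hψpos : ∀ u, 0 ≤ ψ u)
    (β c : ℝ) (hβ : 0 < β ∧ β ≤ 1) (hc : 0 < c)
    (hψtail : ∀ ρ : ℝ, 1 ≤ ρ → ∫ u in {u : Ed d | ρ ≤ ‖u‖}, ψ u ≤ c * ρ ^ (-β))
    (W : Ed d → ℝ) (hWmeas : Measurable W) (hWpos : ∀ h, 0 ≤ W h)
    (hWbdd : ∃ M : ℝ, ∀ h, W h ≤ M)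
    (βΩ cΩ : ℝ) (hβΩ : 0 < βΩ ∧ βΩ ≤ 1) (hcΩ : 0 < cΩ)
    (hW : ∀ h : Ed d, ‖h‖ ≤ 2 → W h ≤ cΩ * ‖h‖ ^ βΩ) :
    ∃ C : ℝ, ∀ lam : ℝ, 2 ≤ lam →
      (β ≠ βΩ →
        lam ^ (2 * d) * ∫ x : Ed d, ψ ((2 * lam) • x) * W ((2 : ℝ) • x) ≤
          C * lam ^ ((d : ℝ) - min β βΩ)) ∧
      (β = βΩ →
        lam ^ (2 * d) * ∫ x : Ed d, ψ ((2 * lam) • x) * W ((2 : ℝ) • x) ≤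
          C * lam ^ ((d : ℝ) - β) * Real.log lam) := by
  obtain ⟨hβ0, hβ1⟩ := hβ
  obtain ⟨hb0, hb1⟩ := hβΩ
  obtain ⟨M, hM⟩ := hWbdd
  have hM0 : 0 ≤ M := le_trans (hWpos 0) (hM 0)
  set K : ℝ := max M (2 * cΩ) with hKdef
  have hK0 : 0 ≤ K := le_trans hM0 (le_max_left _ _)
  have hKM : M ≤ K := le_max_left _ _
  have hKc : cΩ ≤ K := le_trans (by linarith) (le_max_right _ _)
  have hK2c : 2 * cΩ ≤ K := le_max_right _ _
  set I : ℝ := ∫ y : Ed d, ψ y with hIdef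
  have hI0 : 0 ≤ I := integral_nonneg hψpos
  have hlog2 : (0:ℝ) < Real.log 2 := Real.log_pos one_lt_two
  set q : ℝ := (2:ℝ) ^ (β - βΩ) with hqdef
  have hq0 : 0 < q := Real.rpow_pos_of_pos two_pos _
  have h2b1 : (0:ℝ) ≤ (2:ℝ) ^ βΩ - 1 := by
    have : (1:ℝ) = (2:ℝ) ^ (0:ℝ) := (Real.rpow_zero 2).symm
    rw [this]
    simp only [sub_nonneg]
    rw [← this]
    calc (1:ℝ) = (2:ℝ) ^ (0:ℝ) := this
    _ ≤ (2:ℝ) ^ βΩ := Real.rpow_le_rpow_of_exponent_le one_le_two hb0.le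
  have h2b2 : (2:ℝ) ^ βΩ ≤ 2 := by
    calc (2:ℝ) ^ βΩ ≤ (2:ℝ) ^ (1:ℝ) := Real.rpow_le_rpow_of_exponent_le one_le_two hb1
    _ = 2 := Real.rpow_one 2
  set A : ℝ := K * (2*I + 2*I/Real.log 2 + ((2:ℝ)^βΩ - 1) * c * (|q/(1-q)| + 1/Real.log 2)) with hAdef
  refine ⟨A / 2^d, fun lam hlam => ?_⟩
  have hlam0 : (0:ℝ) < lam := by linarith
  have hlam1 : (1:ℝ) ≤ lam := by linarith
  -- dyadic scale
  set N : ℕ := Nat.log 2 ⌊lam⌋₊ with hNdef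
  have hfl1 : 1 ≤ ⌊lam⌋₊ := Nat.le_floor (by exact_mod_cast hlam1)
  have h2N : (2:ℝ)^N ≤ lam := by
    have h1 : (2:ℕ)^N ≤ ⌊lam⌋₊ := Nat.pow_log_le_self 2 (by omega)
    calc (2:ℝ)^N = ((2^N : ℕ) : ℝ) := by push_cast; ring
    _ ≤ (⌊lam⌋₊ : ℝ) := by exact_mod_cast h1
    _ ≤ lam := Nat.floor_le hlam0.le
  have h2N' : lam < 2^(N+1) := by
    have h1 : ⌊lam⌋₊ < 2^(N+1) := Nat.lt_pow_succ_log_self (by norm_num) _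
    have h2 : ⌊lam⌋₊ + 1 ≤ 2^(N+1) := h1
    calc lam < (⌊lam⌋₊ : ℝ) + 1 := Nat.lt_floor_add_one lam
    _ ≤ ((2^(N+1) : ℕ) : ℝ) := by exact_mod_cast h2
    _ = 2^(N+1) := by push_cast; ring
  set ρ : ℕ → ℝ := fun k => lam * 2^k / 2^N with hρdef
  have hρmono : Monotone ρ := by
    intro k l hkl
    simp only [hρdef]
    have h1 : (2:ℝ)^k ≤ 2^l := pow_le_pow_right₀ one_le_two hkl
    have h2 : (0:ℝ) < 2^N := by positivity
    exact div_le_div_of_nonneg_right (mul_le_mul_of_nonneg_left h1 hlam0.le) h2.le |>.trans le_rfl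
  have hρ1 : ∀ k, 1 ≤ ρ k := by
    intro k
    have h1 : lam * 1 / 2^N ≤ ρ k := by
      simp only [hρdef]
      have h2 : (1:ℝ) ≤ 2^k := one_le_pow₀ one_le_two
      have h3 : (0:ℝ) < 2^N := by positivity
      exact div_le_div_of_nonneg_right (mul_le_mul_of_nonneg_left h2 hlam0.le) h3.le |>.trans le_rfl
    refine le_trans ?_ h1
    rw [mul_one, le_div_iff₀ (by positivity)]
    linarith only [h2N]
  have hρle : ∀ k, k ≤ N → ρ k ≤ lam := by
    intro k hk
    simp only [hρdef]
    rw [div_le_iff₀ (by positivity)]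
    exact mul_le_mul_of_nonneg_left (pow_le_pow_right₀ one_le_two hk) hlam0.le
  have hρN : ρ N = lam := by
    simp only [hρdef]
    field_simp
  -- the profile function
  set g : ℝ → ℝ := fun r => min 1 ((max r 0 / lam) ^ βΩ) with hgdef
  have hgmono : Monotone g := by
    intro r s hrs
    simp only [hgdef]
    refine min_le_min le_rfl (Real.rpow_le_rpow (by positivity) ?_ hb0.le)
    gcongr
  have hg1 : ∀ r, g r ≤ 1 := fun r => min_le_left _ _
  have hgval : ∀ k, k ≤ N → g (ρ k) = ((2:ℝ)^k / 2^N) ^ βΩ := by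
    intro k hk
    have h1 : max (ρ k) 0 = ρ k := max_eq_left (le_trans zero_le_one (hρ1 k))
    have h2 : ρ k / lam = (2:ℝ)^k / 2^N := by
      simp only [hρdef]; field_simp
    have h3 : ((2:ℝ)^k / 2^N) ^ βΩ ≤ 1 := by
      apply Real.rpow_le_one (by positivity) _ hb0.le
      rw [div_le_one (by positivity)]
      exact pow_le_pow_right₀ one_le_two hk
    simp only [hgdef, h1, h2]
    exact min_eq_right h3
  have hgcap : ∀ r, g r ≤ g (ρ N) := by
    intro r
    have : g (ρ N) = 1 := by
      rw [hgval N le_rfl, div_self (by positivity), Real.one_rpow]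
    rw [this]; exact hg1 r
  -- pointwise domination of W
  have hWg : ∀ y : Ed d, W (lam⁻¹ • y) ≤ K * g ‖y‖ := by
    intro y
    have hnorm : ‖lam⁻¹ • y‖ = ‖y‖ / lam := by
      rw [norm_smul, Real.norm_eq_abs, abs_inv, abs_of_pos hlam0]
      ring
    have hmax : max ‖y‖ 0 = ‖y‖ := max_eq_left (norm_nonneg y)
    have hgy : g ‖y‖ = min 1 ((‖y‖/lam) ^ βΩ) := by simp only [hgdef, hmax]
    set s : ℝ := ‖y‖ / lam with hsdef
    have hs0 : 0 ≤ s := by positivity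
    by_cases hs1 : s ≤ 1
    · have hmin : min 1 (s ^ βΩ) = s ^ βΩ :=
        min_eq_right (Real.rpow_le_one hs0 hs1 hb0.le)
      have hWy : W (lam⁻¹ • y) ≤ cΩ * s ^ βΩ := by
        have := hW (lam⁻¹ • y) (by rw [hnorm]; linarith)
        rwa [hnorm] at this
      rw [hgy, hmin]
      calc W (lam⁻¹ • y) ≤ cΩ * s ^ βΩ := hWy
      _ ≤ K * s ^ βΩ := by
          apply mul_le_mul_of_nonneg_right hKc (by positivity)
    · push_neg at hs1
      have hmin : min 1 (s ^ βΩ) = 1 := by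
        apply min_eq_left
        calc (1:ℝ) = (1:ℝ) ^ βΩ := (Real.one_rpow _).symm
        _ ≤ s ^ βΩ := Real.rpow_le_rpow zero_le_one hs1.le hb0.le
      rw [hgy, hmin, mul_one]
      by_cases hs2 : s ≤ 2
      · have hWy : W (lam⁻¹ • y) ≤ cΩ * s ^ βΩ := by
          have := hW (lam⁻¹ • y) (by rw [hnorm]; exact hs2)
          rwa [hnorm] at this
        calc W (lam⁻¹ • y) ≤ cΩ * s ^ βΩ := hWy
        _ ≤ cΩ * 2 ^ βΩ := by
            apply mul_le_mul_of_nonneg_left (Real.rpow_le_rpow hs0 hs2 hb0.le) hcΩ.le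
        _ ≤ cΩ * 2 := mul_le_mul_of_nonneg_left h2b2 hcΩ.le
        _ ≤ K := by linarith only [hK2c]
      · exact le_trans (hM _) hKM
  -- the majorant and its integral
  set S : ℕ → Set (Ed d) := fun k => {u : Ed d | ρ k ≤ ‖u‖} with hSdef
  have hSmeas : ∀ k, MeasurableSet (S k) := fun k =>
    (isClosed_le continuous_const continuous_norm).measurableSet
  set T : ℕ → ℝ := fun k => ∫ u in S k, ψ u with hTdef
  set a : ℝ := g (ρ 0) with hadef
  set Δ : ℕ → ℝ := fun k => g (ρ (k+1)) - g (ρ k) with hΔdef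
  have hΔ0 : ∀ k, 0 ≤ Δ k := fun k => sub_nonneg.2 (hgmono (hρmono (Nat.le_succ k)))
  set J : ℝ := ∫ y : Ed d, ψ y * W (lam⁻¹ • y) with hJdef
  set Φ : Ed d → ℝ := fun y =>
    K * a * ψ y + ∑ k ∈ Finset.range N, K * Δ k * (S k).indicator ψ y with hΦdef
  have hΦint : Integrable Φ := by
    apply Integrable.add (hψint.const_mul _)
    exact integrable_finset_sum _ (fun k _ => (hψint.indicator (hSmeas k)).const_mul _)
  have hptw : ∀ y : Ed d, ψ y * W (lam⁻¹ • y) ≤ Φ y := by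
    intro y
    have h1 : ψ y * W (lam⁻¹ • y) ≤ ψ y * (K * g ‖y‖) :=
      mul_le_mul_of_nonneg_left (hWg y) (hψpos y)
    have h2 : g ‖y‖ ≤ a + ∑ k ∈ Finset.range N, Δ k * (if ρ k ≤ ‖y‖ then 1 else 0) :=
      abel_pointwise hgmono ρ hρmono N hgcap ‖y‖
    have h3 : ψ y * (K * g ‖y‖) ≤ ψ y * (K * (a + ∑ k ∈ Finset.range N, Δ k * (if ρ k ≤ ‖y‖ then 1 else 0))) := by
      apply mul_le_mul_of_nonneg_left _ (hψpos y)
      exact mul_le_mul_of_nonneg_left h2 hK0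
    refine le_trans h1 (le_trans h3 (le_of_eq ?_))
    simp only [hΦdef, mul_add, Finset.mul_sum]
    congr 1
    · ring
    apply Finset.sum_congr rfl
    intro k _
    rw [Set.indicator_apply]
    by_cases h : y ∈ S k
    · rw [if_pos h, if_pos (by exact h)]; ring
    · rw [if_neg h, if_neg (by exact h)]; ring
  have hintΦ : ∫ y : Ed d, Φ y = K * a * I + ∑ k ∈ Finset.range N, K * Δ k * T k := by
    simp only [hΦdef]
    rw [integral_add (hψint.const_mul _)
      (integrable_finset_sum _ (fun k _ => (hψint.indicator (hSmeas k)).const_mul _))]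
    rw [integral_finset_sum _ (fun k _ => (hψint.indicator (hSmeas k)).const_mul _)]
    congr 1
    · exact integral_const_mul _ _
    apply Finset.sum_congr rfl
    intro k _
    rw [integral_const_mul, integral_indicator (hSmeas k)]
  have hJΦ : J ≤ K * (a * I + ∑ k ∈ Finset.range N, Δ k * T k) := by
    have h1 : J ≤ ∫ y : Ed d, Φ y := by
      apply integral_mono_of_nonneg
      · exact Filter.Eventually.of_forall (fun y => mul_nonneg (hψpos y) (hWpos _))
      · exact hΦint
      · exact Filter.Eventually.of_forall hptw
    rw [hintΦ] at h1
    calc J ≤ K * a * I + ∑ k ∈ Finset.range N, K * Δ k * T k := h1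
    _ = K * (a * I + ∑ k ∈ Finset.range N, Δ k * T k) := by
        rw [mul_add, Finset.mul_sum, mul_assoc]
        congr 1
        apply Finset.sum_congr rfl
        intro k _; ring
  -- tail and increment estimates
  have hlambeta : (0:ℝ) ≤ lam ^ (-β) := Real.rpow_nonneg hlam0.le _
  have hlambo : (0:ℝ) ≤ lam ^ (-βΩ) := Real.rpow_nonneg hlam0.le _
  have hTb : ∀ k, T k ≤ c * (lam ^ (-β) * ((2:ℝ)^k/2^N) ^ (-β)) := by
    intro k
    have h1 : T k ≤ c * (ρ k) ^ (-β) := hψtail (ρ k) (hρ1 k)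
    have h2 : (ρ k : ℝ) ^ (-β) = lam ^ (-β) * ((2:ℝ)^k/2^N) ^ (-β) := by
      have h3 : ρ k = lam * ((2:ℝ)^k / 2^N) := by simp only [hρdef]; ring
      rw [h3, Real.mul_rpow hlam0.le (by positivity)]
    rwa [h2] at h1
  have hΔval : ∀ k, k < N → Δ k = ((2:ℝ)^k/2^N) ^ βΩ * ((2:ℝ)^βΩ - 1) := by
    intro k hk
    have e1 : g (ρ (k+1)) = ((2:ℝ)^(k+1)/2^N) ^ βΩ := hgval (k+1) hk
    have e2 : g (ρ k) = ((2:ℝ)^k/2^N) ^ βΩ := hgval k hk.le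
    have e3 : ((2:ℝ)^(k+1)/(2:ℝ)^N) = 2 * ((2:ℝ)^k/2^N) := by rw [pow_succ]; ring
    simp only [hΔdef]
    rw [e1, e2, e3, Real.mul_rpow (by norm_num) (by positivity)]
    ring
  have hxq : ∀ k, k < N → ((2:ℝ)^k/2^N) ^ βΩ * ((2:ℝ)^k/2^N) ^ (-β) = q ^ (N - k) := by
    intro k hk
    have hm : N = k + (N - k) := by omega
    have hxm : ((2:ℝ)^k/2^N) = ((2:ℝ)^((N:ℕ) - k))⁻¹ := by
      rw [hm, pow_add]
      field_simp
      rw [Nat.add_sub_cancel_left]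
    rw [hxm, ← Real.rpow_natCast (2:ℝ) (N - k), ← Real.rpow_neg two_pos.le,
      ← Real.rpow_mul two_pos.le, ← Real.rpow_mul two_pos.le, ← Real.rpow_add two_pos,
      hqdef, ← Real.rpow_natCast ((2:ℝ)^(β - βΩ)) (N - k), ← Real.rpow_mul two_pos.le]
    congr 1
    ring
  have hterm : ∀ k ∈ Finset.range N, Δ k * T k ≤ ((2:ℝ)^βΩ - 1) * c * lam^(-β) * q ^ (N - k) := by
    intro k hk
    have hk' := Finset.mem_range.1 hk
    have h1 : Δ k * T k ≤ Δ k * (c * (lam^(-β) * ((2:ℝ)^k/2^N)^(-β))) :=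
      mul_le_mul_of_nonneg_left (hTb k) (hΔ0 k)
    have h2 : Δ k * (c * (lam^(-β) * ((2:ℝ)^k/2^N)^(-β)))
        = ((2:ℝ)^βΩ - 1) * c * lam^(-β) * (((2:ℝ)^k/2^N)^βΩ * ((2:ℝ)^k/2^N)^(-β)) := by
      rw [hΔval k hk']; ring
    rw [hxq k hk'] at h2
    exact le_trans h1 (le_of_eq h2)
  set G : ℝ := ∑ k ∈ Finset.range N, q^k with hGdef
  have hG0 : 0 ≤ G := Finset.sum_nonneg (fun k _ => pow_nonneg hq0.le k)
  have hGmul : G * (q - 1) = q ^ N - 1 := geom_sum_mul q N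
  have hreflect : ∑ k ∈ Finset.range N, q ^ (N - k) = q * G := by
    have h1 := Finset.sum_range_reflect (fun j => q ^ (j+1)) N
    have h2 : ∀ j ∈ Finset.range N, q ^ (N - j) = q ^ ((N - 1 - j) + 1) := by
      intro j hj
      congr 1
      have := Finset.mem_range.1 hj
      omega
    rw [Finset.sum_congr rfl h2, h1, hGdef, Finset.mul_sum]
    exact Finset.sum_congr rfl (fun j _ => by rw [pow_succ]; ring)
  have hsum : ∑ k ∈ Finset.range N, Δ k * T k
      ≤ ((2:ℝ)^βΩ - 1) * c * lam^(-β) * (q * G) := by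
    calc ∑ k ∈ Finset.range N, Δ k * T k
        ≤ ∑ k ∈ Finset.range N, ((2:ℝ)^βΩ - 1) * c * lam^(-β) * q ^ (N - k) :=
          Finset.sum_le_sum hterm
    _ = ((2:ℝ)^βΩ - 1) * c * lam^(-β) * ∑ k ∈ Finset.range N, q ^ (N - k) := by
        rw [← Finset.mul_sum]
    _ = _ := by rw [hreflect]
  have ha2 : a ≤ 2 * lam ^ (-βΩ) := by
    have h1 : a = ((2:ℝ)^(0:ℕ)/2^N) ^ βΩ := hgval 0 (Nat.zero_le N)
    have h2 : ((2:ℝ)^(0:ℕ)/2^N) ≤ 2/lam := by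
      rw [pow_zero, div_le_div_iff₀ (by positivity) hlam0]
      have h5 := h2N'.le
      rw [pow_succ] at h5
      linarith
    have h3 : ((2:ℝ)^(0:ℕ)/2^N)^βΩ ≤ (2/lam)^βΩ :=
      Real.rpow_le_rpow (by positivity) h2 hb0.le
    have h4 : (2/lam)^βΩ = (2:ℝ)^βΩ * lam^(-βΩ) := by
      rw [Real.div_rpow (by norm_num) hlam0.le, Real.rpow_neg hlam0.le, div_eq_mul_inv]
    rw [h4] at h3
    rw [h1]
    have h6 : (2:ℝ)^βΩ * lam^(-βΩ) ≤ 2 * lam^(-βΩ) := mul_le_mul_of_nonneg_right h2b2 hlambo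
    linarith only [h3, h6]
  have hJmaster : J ≤ K * (2 * lam^(-βΩ) * I + ((2:ℝ)^βΩ - 1) * c * lam^(-β) * (q * G)) := by
    refine hJΦ.trans (mul_le_mul_of_nonneg_left ?_ hK0)
    have hA1 : a * I ≤ 2 * lam^(-βΩ) * I := mul_le_mul_of_nonneg_right ha2 hI0
    linarith only [hA1, hsum]
  -- case analysis
  have hJ1 : β < βΩ → J ≤ A * lam ^ (-β) := by
    intro hlt
    have hq1 : q < 1 := by
      rw [hqdef]; exact Real.rpow_lt_one_of_one_lt_of_neg one_lt_two (by linarith)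
    have hGle : G ≤ 1/(1-q) := by
      rw [le_div_iff₀ (by linarith only [hq1])]
      linarith only [hGmul, pow_nonneg hq0.le N]
    have hqG : q * G ≤ |q/(1-q)| + 1/Real.log 2 := by
      have h1 : q * G ≤ q / (1-q) := by
        have := mul_le_mul_of_nonneg_left hGle hq0.le
        calc q * G ≤ q * (1/(1-q)) := this
        _ = q/(1-q) := by ring
      refine h1.trans (le_trans (le_abs_self _) (le_add_of_nonneg_right (by positivity)))
    have hexp : lam^(-βΩ) ≤ lam^(-β) := Real.rpow_le_rpow_of_exponent_le hlam1 (by linarith)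
    have t1 : 2 * lam^(-βΩ) * I ≤ 2 * I * lam^(-β) := by
      linarith only [mul_le_mul_of_nonneg_left hexp hI0]
    have t2 : ((2:ℝ)^βΩ - 1) * c * lam^(-β) * (q * G)
        ≤ ((2:ℝ)^βΩ - 1) * c * (|q/(1-q)| + 1/Real.log 2) * lam^(-β) := by
      have hP : (0:ℝ) ≤ ((2:ℝ)^βΩ - 1) * c * lam^(-β) := by positivity
      have h7 := mul_le_mul_of_nonneg_left hqG hP
      linarith only [h7]
    calc J ≤ K * (2 * lam^(-βΩ) * I + ((2:ℝ)^βΩ - 1) * c * lam^(-β) * (q * G)) := hJmaster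
    _ ≤ K * ((2*I + 2*I/Real.log 2 + ((2:ℝ)^βΩ - 1) * c * (|q/(1-q)| + 1/Real.log 2)) * lam^(-β)) := by
        apply mul_le_mul_of_nonneg_left _ hK0
        have h5 : (0:ℝ) ≤ 2*I/Real.log 2 * lam^(-β) := by positivity
        linarith only [t1, t2, h5]
    _ = A * lam^(-β) := by rw [hAdef]; ring
  have hJ2 : βΩ < β → J ≤ A * lam ^ (-βΩ) := by
    intro hlt
    have hq1 : 1 < q := by
      rw [hqdef, Real.one_lt_rpow_iff_of_pos two_pos]
      exact Or.inl ⟨one_lt_two, by linarith⟩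
    have habs : |q/(1-q)| = q/(q-1) := by
      rw [abs_div, abs_of_pos hq0, abs_of_neg (by linarith : (1:ℝ) - q < 0)]
      congr 1
      ring
    have hqN : q ^ N ≤ lam ^ (β - βΩ) := by
      have h1 : q ^ N = ((2:ℝ)^N) ^ (β - βΩ) := by
        rw [hqdef, ← Real.rpow_natCast ((2:ℝ)^(β - βΩ)) N, ← Real.rpow_mul two_pos.le,
          mul_comm, Real.rpow_mul two_pos.le, Real.rpow_natCast]
      rw [h1]
      exact Real.rpow_le_rpow (by positivity) h2N (by linarith)
    have hqG : q * G ≤ q/(q-1) * lam ^ (β - βΩ) := by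
      have hG2 : G ≤ lam ^ (β - βΩ) / (q - 1) := by
        rw [le_div_iff₀ (by linarith only [hq1])]
        linarith only [hGmul, hqN]
      have := mul_le_mul_of_nonneg_left hG2 hq0.le
      calc q * G ≤ q * (lam ^ (β - βΩ) / (q-1)) := this
      _ = q/(q-1) * lam ^ (β - βΩ) := by ring
    have hcomb : lam^(-β) * lam^(β - βΩ) = lam^(-βΩ) := by
      rw [← Real.rpow_add hlam0]
      congr 1
      ring
    have t2 : ((2:ℝ)^βΩ - 1) * c * lam^(-β) * (q * G)
        ≤ ((2:ℝ)^βΩ - 1) * c * (|q/(1-q)| + 1/Real.log 2) * lam^(-βΩ) := by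
      have hP : (0:ℝ) ≤ ((2:ℝ)^βΩ - 1) * c * lam^(-β) := by positivity
      have h1 := mul_le_mul_of_nonneg_left hqG hP
      have h2 : ((2:ℝ)^βΩ - 1) * c * lam^(-β) * (q/(q-1) * lam ^ (β - βΩ))
          = ((2:ℝ)^βΩ - 1) * c * (q/(q-1)) * (lam^(-β) * lam^(β - βΩ)) := by ring
      rw [h2, hcomb] at h1
      have h3 : ((2:ℝ)^βΩ - 1) * c * (q/(q-1)) * lam^(-βΩ)
          ≤ ((2:ℝ)^βΩ - 1) * c * (|q/(1-q)| + 1/Real.log 2) * lam^(-βΩ) := by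
        rw [habs]
        refine mul_le_mul_of_nonneg_right ?_ hlambo
        exact mul_le_mul_of_nonneg_left (le_add_of_nonneg_right (by positivity)) (by positivity)
      linarith only [h1, h3]
    calc J ≤ K * (2 * lam^(-βΩ) * I + ((2:ℝ)^βΩ - 1) * c * lam^(-β) * (q * G)) := hJmaster
    _ ≤ K * ((2*I + 2*I/Real.log 2 + ((2:ℝ)^βΩ - 1) * c * (|q/(1-q)| + 1/Real.log 2)) * lam^(-βΩ)) := by
        apply mul_le_mul_of_nonneg_left _ hK0
        have h5 : (0:ℝ) ≤ 2*I/Real.log 2 * lam^(-βΩ) := by positivity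
        linarith only [t2, h5]
    _ = A * lam^(-βΩ) := by rw [hAdef]; ring
  have hJ3 : β = βΩ → J ≤ A * lam ^ (-β) * Real.log lam := by
    intro heq
    have hq1 : q = 1 := by rw [hqdef, ← heq, sub_self, Real.rpow_zero]
    have hGN : G = (N:ℝ) := by
      rw [hGdef]
      simp [hq1]
    have hloglam : Real.log 2 ≤ Real.log lam := Real.log_le_log two_pos hlam
    have hlog0 : 0 < Real.log lam := lt_of_lt_of_le hlog2 hloglam
    have hNlog : (N:ℝ) * Real.log 2 ≤ Real.log lam := by
      have h1 := Real.log_le_log (by positivity) h2N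
      rwa [Real.log_pow] at h1
    have hNle : (N:ℝ) ≤ Real.log lam / Real.log 2 := by
      rw [le_div_iff₀ hlog2]; exact hNlog
    have hr1 : (1:ℝ) ≤ Real.log lam / Real.log 2 := by
      rw [le_div_iff₀ hlog2]; linarith
    have hqG : q * G ≤ Real.log lam / Real.log 2 := by
      rw [hq1, hGN, one_mul]; exact hNle
    have t1 : 2 * lam^(-βΩ) * I ≤ 2 * I / Real.log 2 * (lam^(-β) * Real.log lam) := by
      rw [← heq]
      have h1 : 2 * I * lam^(-β) * 1 ≤ 2 * I * lam^(-β) * (Real.log lam / Real.log 2) :=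
        mul_le_mul_of_nonneg_left hr1 (by positivity)
      calc 2 * lam^(-β) * I = 2 * I * lam^(-β) * 1 := by ring
      _ ≤ 2 * I * lam^(-β) * (Real.log lam / Real.log 2) := h1
      _ = 2 * I / Real.log 2 * (lam^(-β) * Real.log lam) := by
          field_simp
    have t2 : ((2:ℝ)^βΩ - 1) * c * lam^(-β) * (q * G)
        ≤ ((2:ℝ)^βΩ - 1) * c / Real.log 2 * (lam^(-β) * Real.log lam) := by
      have hP : (0:ℝ) ≤ ((2:ℝ)^βΩ - 1) * c * lam^(-β) := by positivity
      have h1 := mul_le_mul_of_nonneg_left hqG hP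
      calc ((2:ℝ)^βΩ - 1) * c * lam^(-β) * (q * G)
          ≤ ((2:ℝ)^βΩ - 1) * c * lam^(-β) * (Real.log lam / Real.log 2) := h1
      _ = ((2:ℝ)^βΩ - 1) * c / Real.log 2 * (lam^(-β) * Real.log lam) := by
          field_simp
    have habs0 : |q/(1-q)| = 0 := by rw [hq1]; norm_num
    have h5 : (0:ℝ) ≤ 2*I*(lam^(-β) * Real.log lam) := by positivity
    have hEq : A * lam ^ (-β) * Real.log lam
        = K*(2*I*(lam^(-β)*Real.log lam))
          + K * ((2*I/Real.log 2 + ((2:ℝ)^βΩ - 1) * c / Real.log 2) * (lam^(-β) * Real.log lam)) := by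
      rw [hAdef, habs0]
      ring
    calc J ≤ K * (2 * lam^(-βΩ) * I + ((2:ℝ)^βΩ - 1) * c * lam^(-β) * (q * G)) := hJmaster
    _ ≤ K * ((2*I/Real.log 2 + ((2:ℝ)^βΩ - 1) * c / Real.log 2) * (lam^(-β) * Real.log lam)) := by
        apply mul_le_mul_of_nonneg_left _ hK0
        rw [add_mul]
        exact add_le_add t1 t2
    _ ≤ A * lam ^ (-β) * Real.log lam := by
        rw [hEq]
        exact le_add_of_nonneg_left (mul_nonneg hK0 h5)
  -- change of variables and final assembly
  have hchange : ∫ x : Ed d, ψ ((2 * lam) • x) * W ((2 : ℝ) • x) = ((2*lam)^d)⁻¹ * J := by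
    have h1 : ∀ x : Ed d, ψ ((2 * lam) • x) * W ((2 : ℝ) • x)
        = (fun y => ψ y * W (lam⁻¹ • y)) ((2*lam) • x) := by
      intro x
      simp only [smul_smul]
      congr 2
      field_simp
    simp_rw [h1]
    rw [MeasureTheory.Measure.integral_comp_smul_of_nonneg (volume)
      (fun y => ψ y * W (lam⁻¹ • y)) (2*lam) (hR := by positivity)]
    rw [finrank_euclideanSpace_fin, smul_eq_mul]
  have hfact : lam ^ (2*d) * (((2*lam)^d)⁻¹ * J) = lam^d * J / 2^d := by
    rw [mul_pow, two_mul, pow_add]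
    have h2 : ((2:ℝ)^d * lam^d) ≠ 0 := by positivity
    field_simp
  have hdm : ∀ e : ℝ, lam ^ ((d:ℝ) + e) = lam^d * lam^e := by
    intro e
    rw [Real.rpow_add hlam0, Real.rpow_natCast]
  constructor
  · intro hne
    rcases lt_or_gt_of_ne hne with hlt | hgt
    · rw [min_eq_left hlt.le, hchange]
      calc lam^(2*d) * (((2*lam)^d)⁻¹ * J) = lam^d * J / 2^d := hfact
      _ ≤ lam^d * (A * lam^(-β)) / 2^d := by
          apply div_le_div_of_nonneg_right _ (by positivity : (0:ℝ) ≤ 2^d) |>.trans le_rfl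
          exact mul_le_mul_of_nonneg_left (hJ1 hlt) (pow_nonneg hlam0.le d)
      _ = A / 2^d * lam ^ ((d:ℝ) - β) := by
          rw [sub_eq_add_neg, hdm]
          ring
    · rw [min_eq_right hgt.le, hchange]
      calc lam^(2*d) * (((2*lam)^d)⁻¹ * J) = lam^d * J / 2^d := hfact
      _ ≤ lam^d * (A * lam^(-βΩ)) / 2^d := by
          apply div_le_div_of_nonneg_right _ (by positivity : (0:ℝ) ≤ 2^d) |>.trans le_rfl
          exact mul_le_mul_of_nonneg_left (hJ2 hgt) (pow_nonneg hlam0.le d)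
      _ = A / 2^d * lam ^ ((d:ℝ) - βΩ) := by
          rw [sub_eq_add_neg, hdm]
          ring
  · intro heq
    rw [hchange]
    calc lam^(2*d) * (((2*lam)^d)⁻¹ * J) = lam^d * J / 2^d := hfact
    _ ≤ lam^d * (A * lam^(-β) * Real.log lam) / 2^d := by
        apply div_le_div_of_nonneg_right _ (by positivity : (0:ℝ) ≤ 2^d) |>.trans le_rfl
        exact mul_le_mul_of_nonneg_left (hJ3 heq) (pow_nonneg hlam0.le d)
    _ = A / 2^d * lam ^ ((d:ℝ) - β) * Real.log lam := by
        rw [sub_eq_add_neg, hdm]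
        ring
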